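/- Let n ≡ 5 (mod 30), n odd. Then every primitive 15th root of unity ζ is a simple (non-repeated) root of the Alexander polynomial Δ_n(t) = (t-1)(t^{n+3}-1)/(t+1) + t(t³+1)(t^n+1)/(t+1)² of the (-2,3,n) pretzel knot. -/

import Mathlib

open Polynomial

/-- The cleared-denominator form of the Alexander polynomial of the `(-2,3,n)` pretzel
knot: `P_n(t) = (t-1)(t+1)(t^{n+3}-1) + t(t³+1)(t^n+1)`, so that
`Δ_n(t) = P_n(t)/(t+1)²`. -/
noncomputable def pretzelAlexanderNum' (n : ℤ) (t : ℂ) : ℂ :=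
  (t - 1) * (t + 1) * (t ^ (n + 3) - 1) + t * (t ^ (3 : ℤ) + 1) * (t ^ n + 1)

/-- For `n ≡ 5 (mod 30)`, every primitive `15`-th root of unity `ζ` is a simple
(non-repeated) root of the Alexander polynomial of the `(-2,3,n)` pretzel knot:
`P_n(ζ) = 0` and `P_n'(ζ) ≠ 0`. -/
theorem alexander_simple_root_at_fifteenth (n : ℤ) (hn : n % 30 = 5) (ζ : ℂ)
    (hζ : IsPrimitiveRoot ζ 15) :
    pretzelAlexanderNum' n ζ = 0 ∧ deriv (pretzelAlexanderNum' n) ζ ≠ 0 := by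
  have hζ0 : ζ ≠ 0 := hζ.ne_zero (by norm_num)
  have h15 : ζ ^ (15 : ℕ) = 1 := hζ.pow_eq_one
  have h5 : ζ ^ (5 : ℕ) ≠ 1 := hζ.pow_ne_one_of_pos_of_lt (by norm_num) (by norm_num)
  have h3 : ζ ^ (3 : ℕ) ≠ 1 := hζ.pow_ne_one_of_pos_of_lt (by norm_num) (by norm_num)
  have hf : ζ ^ 10 + ζ ^ 5 + 1 = 0 := by
    have h : (ζ ^ 5 - 1) * (ζ ^ 10 + ζ ^ 5 + 1) = 0 := by linear_combination h15
    rcases mul_eq_zero.1 h with h | h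
    · exact absurd (by linear_combination h) h5
    · exact h
  have hg : ζ ^ 12 + ζ ^ 9 + ζ ^ 6 + ζ ^ 3 + 1 = 0 := by
    have h : (ζ ^ 3 - 1) * (ζ ^ 12 + ζ ^ 9 + ζ ^ 6 + ζ ^ 3 + 1) = 0 := by
      linear_combination h15
    rcases mul_eq_zero.1 h with h | h
    · exact absurd (by linear_combination h) h3
    · exact h
  have hphi : ζ ^ 8 - ζ ^ 7 + ζ ^ 5 - ζ ^ 4 + ζ ^ 3 - ζ + 1 = 0 := by
    linear_combination (ζ ^ 3 + 1) * hf - ζ * hg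
  -- zpow reduction
  have key : ∀ r : ℤ, ζ ^ r = ζ ^ (r % 15).toNat := by
    intro r
    conv_lhs => rw [← Int.mul_ediv_add_emod r 15]
    rw [zpow_add₀ hζ0, zpow_mul, show ((15 : ℤ)) = ((15 : ℕ) : ℤ) from by norm_num,
      zpow_natCast, h15, one_zpow, one_mul, ← zpow_natCast,
      Int.toNat_of_nonneg (Int.emod_nonneg r (by norm_num))]
  have en : ζ ^ n = ζ ^ (5 : ℕ) := by rw [key n]; congr 1; omega
  have en3 : ζ ^ (n + 3) = ζ ^ (8 : ℕ) := by rw [key (n + 3)]; congr 1; omega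
  have en2 : ζ ^ (n + 2) = ζ ^ (7 : ℕ) := by rw [key (n + 2)]; congr 1; omega
  have en1 : ζ ^ (n - 1) = ζ ^ (4 : ℕ) := by rw [key (n - 1)]; congr 1; omega
  have e3 : ζ ^ (3 : ℤ) = ζ ^ (3 : ℕ) := by rw [key 3]; congr 1
  have e2 : ζ ^ (2 : ℤ) = ζ ^ (2 : ℕ) := by rw [key 2]; congr 1
  constructor
  · show (ζ - 1) * (ζ + 1) * (ζ ^ (n + 3) - 1) + ζ * (ζ ^ (3 : ℤ) + 1) * (ζ ^ n + 1) = 0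
    rw [en3, en, e3]
    linear_combination (ζ ^ 2 + 2 * ζ + 1) * hphi
  · -- derivative
    have hid := hasDerivAt_id ζ
    have d1 : HasDerivAt (fun t : ℂ => t ^ (n + 3)) (((n + 3 : ℤ) : ℂ) * ζ ^ (n + 3 - 1)) ζ :=
      hasDerivAt_zpow (n + 3) ζ (Or.inl hζ0)
    have d2 : HasDerivAt (fun t : ℂ => t ^ n) ((n : ℂ) * ζ ^ (n - 1)) ζ :=
      hasDerivAt_zpow n ζ (Or.inl hζ0)
    have d3 : HasDerivAt (fun t : ℂ => t ^ (3 : ℤ)) (((3 : ℤ) : ℂ) * ζ ^ ((3 : ℤ) - 1)) ζ :=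
      hasDerivAt_zpow 3 ζ (Or.inl hζ0)
    have hA : HasDerivAt (fun t : ℂ => (t - 1) * (t + 1) * (t ^ (n + 3) - 1))
        ((1 * (ζ + 1) + (ζ - 1) * 1) * (ζ ^ (n + 3) - 1)
          + (ζ - 1) * (ζ + 1) * (((n + 3 : ℤ) : ℂ) * ζ ^ (n + 3 - 1))) ζ :=
      ((hid.sub_const 1).mul (hid.add_const 1)).mul (d1.sub_const 1)
    have hB : HasDerivAt (fun t : ℂ => t * (t ^ (3 : ℤ) + 1) * (t ^ n + 1))
        ((1 * (ζ ^ (3 : ℤ) + 1) + ζ * (((3 : ℤ) : ℂ) * ζ ^ ((3 : ℤ) - 1))) * (ζ ^ n + 1)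
          + ζ * (ζ ^ (3 : ℤ) + 1) * ((n : ℂ) * ζ ^ (n - 1))) ζ :=
      (hid.mul (d3.add_const 1)).mul (d2.add_const 1)
    have hD := (hA.add hB).deriv
    rw [show ((fun t : ℂ => (t - 1) * (t + 1) * (t ^ (n + 3) - 1))
        + fun t : ℂ => t * (t ^ (3 : ℤ) + 1) * (t ^ n + 1)) = pretzelAlexanderNum' n from rfl] at hD
    rw [hD]
    intro hc
    rw [show n + 3 - 1 = n + 2 from by ring, show (3 : ℤ) - 1 = 2 from by norm_num,
      en3, en, en2, en1, e3, e2] at hc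
    push_cast at hc
    -- the reduced polynomial q, which must be divisible by the minimal polynomial of ζ
    set N : ℚ := (n : ℚ) with hN
    set q : ℚ[X] := C (6 + N) * X ^ 7 - C (5 + N) * X ^ 6 - C 3 * X ^ 5 + C (4 + N) * X ^ 4
      - C (5 + 2 * N) * X ^ 3 + C (5 + N) * X ^ 2 + C (2 + N) * X - C (8 + 2 * N) with hq
    have hq0 : aeval ζ q = 0 := by
      rw [hq, hN]
      simp only [map_add, map_sub, map_mul, map_pow, aeval_C, aeval_X, eq_ratCast]
      push_cast
      linear_combination hc - (((n : ℂ) + 5) * ζ + (2 * (n : ℂ) + 9)) * hphi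
    have hqne : q ≠ 0 := by
      intro h0
      have h7 : q.coeff 7 = 0 := by rw [h0]; simp
      have h6 : q.coeff 6 = 0 := by rw [h0]; simp
      rw [hq] at h7 h6
      simp only [coeff_sub, coeff_add, coeff_C_mul, coeff_X_pow, coeff_C, coeff_X] at h7 h6
      norm_num at h7 h6
      linarith
    have hdvd : minpoly ℚ ζ ∣ q := minpoly.dvd ℚ ζ hq0
    have hdeg : (minpoly ℚ ζ).natDegree = 8 := by
      rw [← Polynomial.cyclotomic_eq_minpoly_rat hζ (by norm_num),
        Polynomial.natDegree_cyclotomic]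
      decide
    have hqdeg : q.natDegree ≤ 7 := by
      rw [hq]; compute_degree!
    have := Polynomial.natDegree_le_of_dvd hdvd hqne
    omega
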